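/- In an abelian group G, suppose elements e_1, ..., e_n generate G and there is a biadditive pairing χ: G × G → Z such that χ(e_i, e_i) = 1 for all i and χ(e_j, e_i) = 0 for all j > i. Then (e_1, ..., e_n) is a free Z-basis of G, so G ≅ Z^n. -/

import Mathlib

/-- If an abelian group `G` is generated by elements `e 0, ..., e (n-1)`
admitting a biadditive pairing `χ : G × G → ℤ` with `χ (e i) (e i) = 1` and
`χ (e j) (e i) = 0` whenever `i < j` (semi-orthonormality), then `(e 0, ..., e (n-1))`
is a free `ℤ`-basis of `G`; in particular `G ≅ ℤ^n`. -/
theorem stmt1 (G : Type*) [AddCommGroup G] (n : ℕ) (e : Fin n → G)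
    (χ : G →+ G →+ ℤ)
    (hgen : AddSubgroup.closure (Set.range e) = ⊤)
    (hdiag : ∀ i, χ (e i) (e i) = 1)
    (htri : ∀ i j : Fin n, i < j → χ (e j) (e i) = 0) :
    (∃ b : Module.Basis (Fin n) ℤ G, ∀ i, b i = e i) ∧
      Nonempty (G ≃+ (Fin n → ℤ)) := by
  -- spanning
  have hspan : Submodule.span ℤ (Set.range e) = ⊤ := by
    have hle : AddSubgroup.closure (Set.range e) ≤
        (Submodule.span ℤ (Set.range e)).toAddSubgroup :=
      (AddSubgroup.closure_le _).2 Submodule.subset_span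
    rw [eq_top_iff]
    intro x _
    exact hle (hgen ▸ AddSubgroup.mem_top x)
  -- linear independence
  have hli : LinearIndependent ℤ e := by
    rw [Fintype.linearIndependent_iff]
    intro g hg
    have key : ∀ i : Fin n, ∑ j, g j * χ (e j) (e i) = 0 := by
      intro i
      have : (χ.flip (e i)) (∑ j, g j • e j) = 0 := by rw [hg]; simp
      rw [map_sum] at this
      simpa [mul_comm] using this
    intro i
    induction i using WellFoundedLT.induction with
    | _ i ih =>
      have hk := key i
      rw [Finset.sum_eq_single i] at hk
      · simpa [hdiag i] using hk
      · intro b _ hb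
        rcases lt_or_gt_of_ne hb with h | h
        · rw [ih b h, zero_mul]
        · rw [htri i b h, mul_zero]
      · intro h; exact absurd (Finset.mem_univ i) h
  let b : Module.Basis (Fin n) ℤ G := Module.Basis.mk hli hspan.ge
  refine ⟨⟨b, fun i => Module.Basis.mk_apply _ _ _⟩, ⟨b.equivFun.toAddEquiv⟩⟩
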